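/- Let μ₀ ∈ ℂ* and let 1 ≤ n < p < q with p, q coprime. Then there exist n pairwise distinct complex numbers ζ_1, ..., ζ_n, each a q-th root of some fixed n-th root z of μ₀^{pq}, whose product ζ_1 ⋯ ζ_n equals μ₀^p. -/
import Mathlib


/-- For `μ₀ ∈ ℂ*` and `1 ≤ n < p < q` with `p, q` coprime, there
is an `n`-th root `z` of `μ₀^{pq}` and pairwise distinct `q`-th roots
`ζ₁, …, ζₙ` of `z` whose product is `μ₀ᵖ`. -/
theorem stmt6 (μ₀ : ℂ) (hμ₀ : μ₀ ≠ 0) (n p q : ℕ)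
    (hn : 1 ≤ n) (hnp : n < p) (hpq : p < q) (hcop : Nat.Coprime p q) :
    ∃ z : ℂ, z ^ n = μ₀ ^ (p * q) ∧
      ∃ ζ : Fin n → ℂ, Function.Injective ζ ∧
        (∀ i, ζ i ^ q = z) ∧ ∏ i, ζ i = μ₀ ^ p := by
  have hq0 : q ≠ 0 := by omega
  have hn0 : n ≠ 0 := by omega
  set ω : ℂ := Complex.exp (2 * Real.pi * Complex.I / q) with hωdef
  have hprim : IsPrimitiveRoot ω q := Complex.isPrimitiveRoot_exp q hq0
  have hωq : ω ^ q = 1 := hprim.pow_eq_one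
  have hω0 : ω ≠ 0 := by
    intro h
    have := hωq
    rw [h, zero_pow hq0] at this
    exact zero_ne_one this
  set T : ℕ := ∑ i : Fin n, (i : ℕ) with hT
  set B : ℂ := μ₀ ^ p / ω ^ T with hB
  have hB0 : B ≠ 0 := div_ne_zero (pow_ne_zero _ hμ₀) (pow_ne_zero _ hω0)
  set A : ℂ := B ^ ((n : ℂ)⁻¹) with hA
  have hAn : A ^ n = B := Complex.cpow_nat_inv_pow B hn0
  have hA0 : A ≠ 0 := by
    intro h
    apply hB0
    rw [← hAn, h, zero_pow hn0]
  have hBq : B ^ q = μ₀ ^ (p * q) := by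
    have h1 : (ω ^ T) ^ q = 1 := by rw [← pow_mul, mul_comm, pow_mul, hωq, one_pow]
    rw [hB, div_pow, h1, div_one, ← pow_mul]
  refine ⟨A ^ q, ?_, fun i => A * ω ^ (i : ℕ), ?_, ?_, ?_⟩
  · calc (A ^ q) ^ n = (A ^ n) ^ q := by rw [← pow_mul, ← pow_mul, mul_comm]
    _ = B ^ q := by rw [hAn]
    _ = μ₀ ^ (p * q) := hBq
  · intro i j h
    have h2 : ω ^ (i : ℕ) = ω ^ (j : ℕ) := mul_left_cancel₀ hA0 h
    exact Fin.ext (hprim.pow_inj (i.2.trans (hnp.trans hpq)) (j.2.trans (hnp.trans hpq)) h2)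
  · intro i
    rw [mul_pow, ← pow_mul, mul_comm (i : ℕ) q, pow_mul, hωq, one_pow, mul_one]
  · rw [Finset.prod_mul_distrib, Finset.prod_const, Finset.card_univ, Fintype.card_fin,
      Finset.prod_pow_eq_pow_sum, ← hT, hAn, hB, div_mul_cancel₀]
    exact pow_ne_zero _ hω0
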